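/- For any nonnegative symmetric balancing function Ŝ (Ŝ(C)=Ŝ(V∖C), Ŝ(∅)=0, Ŝ>0 on proper nonempty sets) and k ≥ 2, the optimal value of the simplex-constrained relaxation min over F ∈ ℝ_+^{n×k}, rows in Δ_k, of ∑_{l=1}^k TV(F_l)/S(F_l) equals k · min_{∅≠C⊊V} cut(C,V∖C)/Ŝ(C), given the exact single-ratio relaxation min_{f non-constant} TV(f)/S(f) = min_{∅≠C⊊V} cut(C,V∖C)/Ŝ(C). -/

import Mathlib

open Finset

/-- Lovasz extension of a set function `Sh` on `V = Fin n`. -/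
noncomputable def lovasz {n : ℕ} (Sh : Finset (Fin n) → ℝ) (f : Fin n → ℝ) : ℝ :=
  ∑ i : Fin n,
    f (Tuple.sort f i) *
      (Sh (if (i : ℕ) = 0 then Finset.univ
            else Finset.univ.filter
              (fun j => f (Tuple.sort f ⟨(i : ℕ) - 1, lt_of_le_of_lt (Nat.sub_le _ _) i.isLt⟩) < f j))
        - Sh (Finset.univ.filter (fun j => f (Tuple.sort f i) < f j)))

/-- cut(A,B) = ∑_{i∈A, j∈B} w_{ij}. -/
noncomputable def cutF {n : ℕ} (W : Matrix (Fin n) (Fin n) ℝ) (A B : Finset (Fin n)) : ℝ :=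
  ∑ i ∈ A, ∑ j ∈ B, W i j

/-- Total variation TV(f) = (1/2) ∑_{i,j} w_{ij} |f_i - f_j|. -/
noncomputable def tv {n : ℕ} (W : Matrix (Fin n) (Fin n) ℝ) (f : Fin n → ℝ) : ℝ :=
  (1 / 2) * ∑ i : Fin n, ∑ j : Fin n, W i j * |f i - f j|

/-- Indicator vector of a set. -/
noncomputable def indic {n : ℕ} (A : Finset (Fin n)) : Fin n → ℝ :=
  fun i => if i ∈ A then 1 else 0

lemma lovasz_const {n : ℕ} (Sh : Finset (Fin n) → ℝ) (h0 : Sh ∅ = 0)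
    (hu : Sh Finset.univ = 0) (a : ℝ) : lovasz Sh (fun _ => a) = 0 := by
  unfold lovasz
  simp [h0, hu, apply_ite Sh]

lemma lovasz_two {n : ℕ} (Sh : Finset (Fin n) → ℝ) (h0 : Sh ∅ = 0)
    (hu : Sh Finset.univ = 0) (C : Finset (Fin n)) (hCne : C.Nonempty)
    (hCu : C ≠ Finset.univ) (a b : ℝ) (hba : b < a) :
    lovasz Sh (fun i => if i ∈ C then a else b) = (a - b) * Sh C := by
  set f : Fin n → ℝ := fun i => if i ∈ C then a else b with hf
  set m := Cᶜ.card with hm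
  have hfa : ∀ j, f j = a ↔ j ∈ C := by
    intro j; by_cases h : j ∈ C <;> simp [hf, h, hba.ne]
  have hfb : ∀ j, f j = b ↔ j ∉ C := by
    intro j; by_cases h : j ∈ C <;> simp [hf, h, hba.ne']
  have hfab : ∀ j, f j = a ∨ f j = b := by
    intro j; by_cases h : j ∈ C <;> simp [hf, h]
  have hmono : Monotone (f ∘ (Tuple.sort f)) := Tuple.monotone_sort f
  have hFa : (Finset.univ.filter fun j => a < f j) = ∅ := by
    apply Finset.filter_false_of_mem
    intro j _
    rcases hfab j with h | h <;> rw [h]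
    · exact lt_irrefl a
    · exact not_lt.2 hba.le
  have hFb : (Finset.univ.filter fun j => b < f j) = C := by
    ext j
    simp only [Finset.mem_filter, Finset.mem_univ, true_and]
    constructor
    · intro h
      rcases hfab j with ha | hb
      · exact (hfa j).1 ha
      · rw [hb] at h; exact absurd h (lt_irrefl b)
    · intro h
      rw [show f j = a from (hfa j).2 h]; exact hba
  have hdown : ∀ i j : Fin n, j ≤ i → f (Tuple.sort f i) = b → f (Tuple.sort f j) = b := by
    intro i j hji hib
    rcases hfab (Tuple.sort f j) with h | h
    · have h2 := hmono hji
      simp only [Function.comp] at h2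
      rw [h, hib] at h2
      exact absurd h2 (not_le.2 hba)
    · exact h
  have hT : (Finset.univ.filter fun i => f (Tuple.sort f i) = b) =
      (Finset.univ.filter fun j => f j = b).image (Tuple.sort f).symm := by
    ext i
    simp only [Finset.mem_filter, Finset.mem_univ, true_and, Finset.mem_image]
    constructor
    · intro h; exact ⟨Tuple.sort f i, h, (Tuple.sort f).symm_apply_apply i⟩
    · rintro ⟨j, hj, rfl⟩; simpa using hj
  have hcardT : (Finset.univ.filter fun i => f (Tuple.sort f i) = b).card = m := by
    rw [hT, Finset.card_image_of_injective _ (Tuple.sort f).symm.injective]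
    congr 1
    ext j; simp [hfb j]
  have hseg : ∀ i : Fin n, f (Tuple.sort f i) = b ↔ (i : ℕ) < m := by
    intro i
    constructor
    · intro h
      by_contra hlt
      push_neg at hlt
      have hsub : Finset.Iic i ⊆ Finset.univ.filter fun i' => f (Tuple.sort f i') = b := by
        intro j hj
        simp only [Finset.mem_Iic] at hj
        simp [hdown i j hj h]
      have := Finset.card_le_card hsub
      rw [hcardT, Fin.card_Iic] at this
      omega
    · intro h
      by_contra hb
      have hsub : (Finset.univ.filter fun i' => f (Tuple.sort f i') = b) ⊆ Finset.Iio i := by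
        intro j hj
        simp only [Finset.mem_filter] at hj
        simp only [Finset.mem_Iio]
        by_contra hji
        push_neg at hji
        exact hb (hdown j i hji hj.2)
      have := Finset.card_le_card hsub
      rw [hcardT, Fin.card_Iio] at this
      omega
  have hmpos : 0 < m := by
    obtain ⟨x, _, hx⟩ := Finset.exists_of_ssubset (Finset.ssubset_univ_iff.2 hCu)
    exact Finset.card_pos.2 ⟨x, Finset.mem_compl.2 hx⟩
  have hmlt : m < n := by
    have h1 : Cᶜ ≠ Finset.univ := by
      simp only [ne_eq, Finset.compl_eq_univ_iff]
      exact hCne.ne_empty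
    have := Finset.card_lt_card (Finset.ssubset_univ_iff.2 h1)
    simpa using this
  have hn : 0 < n := hmpos.trans hmlt
  unfold lovasz
  rw [show (∑ i : Fin n,
      f (Tuple.sort f i) *
        (Sh (if (i : ℕ) = 0 then Finset.univ
              else Finset.univ.filter
                (fun j => f (Tuple.sort f ⟨(i : ℕ) - 1, lt_of_le_of_lt (Nat.sub_le _ _) i.isLt⟩) < f j))
          - Sh (Finset.univ.filter (fun j => f (Tuple.sort f i) < f j)))) =
      ∑ i : Fin n, ((if i = (⟨0, hn⟩ : Fin n) then -(b * Sh C) else 0)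
        + (if i = (⟨m, hmlt⟩ : Fin n) then a * Sh C else 0)) from ?_]
  · rw [Finset.sum_add_distrib, Finset.sum_ite_eq', Finset.sum_ite_eq']
    simp only [Finset.mem_univ, if_true]
    ring
  · apply Finset.sum_congr rfl
    intro i _
    rcases Nat.lt_trichotomy (i : ℕ) m with hi | hi | hi
    · have hgi : f (Tuple.sort f i) = b := (hseg i).2 hi
      have him : i ≠ (⟨m, hmlt⟩ : Fin n) := by
        intro h; rw [h] at hi; simp at hi
      by_cases h0i : (i : ℕ) = 0
      · rw [if_pos h0i, if_pos (Fin.ext h0i : i = ⟨0, hn⟩), if_neg him, hgi, hFb, hu]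
        ring
      · have hi' : i ≠ (⟨0, hn⟩ : Fin n) := by
          intro h; rw [h] at h0i; simp at h0i
        have hpred : f (Tuple.sort f ⟨(i : ℕ) - 1, lt_of_le_of_lt (Nat.sub_le _ _) i.isLt⟩) = b :=
          (hseg _).2 (lt_of_le_of_lt (Nat.sub_le _ _) hi)
        rw [if_neg h0i, if_neg hi', if_neg him, hgi, hpred, hFb]
        ring
    · have hgi : f (Tuple.sort f i) = a := by
        rcases hfab (Tuple.sort f i) with h | h
        · exact h
        · exact absurd ((hseg i).1 h) (by omega)
      have h0i : (i : ℕ) ≠ 0 := by omega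
      have hi' : i ≠ (⟨0, hn⟩ : Fin n) := by
        intro h; rw [h] at h0i; simp at h0i
      have him : i = (⟨m, hmlt⟩ : Fin n) := Fin.ext hi
      have hpred : f (Tuple.sort f ⟨(i : ℕ) - 1, lt_of_le_of_lt (Nat.sub_le _ _) i.isLt⟩) = b :=
        (hseg _).2 (by simp only [Fin.val_mk]; omega)
      rw [if_neg h0i, if_neg hi', if_pos him, hgi, hpred, hFb, hFa, h0]
      ring
    · have hgi : f (Tuple.sort f i) = a := by
        rcases hfab (Tuple.sort f i) with h | h
        · exact h
        · exact absurd ((hseg i).1 h) (by omega)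
      have h0i : (i : ℕ) ≠ 0 := by omega
      have hi' : i ≠ (⟨0, hn⟩ : Fin n) := by
        intro h; rw [h] at h0i; simp at h0i
      have him : i ≠ (⟨m, hmlt⟩ : Fin n) := by
        intro h; rw [h] at hi; simp only [Fin.val_mk] at hi; omega
      have hpred : f (Tuple.sort f ⟨(i : ℕ) - 1, lt_of_le_of_lt (Nat.sub_le _ _) i.isLt⟩) = a := by
        rcases hfab (Tuple.sort f ⟨(i : ℕ) - 1, lt_of_le_of_lt (Nat.sub_le _ _) i.isLt⟩) with h | h
        · exact h
        · have := (hseg _).1 h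
          simp only [Fin.val_mk] at this
          omega
      rw [if_neg h0i, if_neg hi', if_neg him, hgi, hpred, hFa, h0]
      ring

lemma cutF_symm {n : ℕ} (W : Matrix (Fin n) (Fin n) ℝ) (hWsym : ∀ i j, W i j = W j i)
    (A B : Finset (Fin n)) : cutF W A B = cutF W B A := by
  unfold cutF
  refine Finset.sum_comm.trans ?_
  exact Finset.sum_congr rfl fun i _ => Finset.sum_congr rfl fun j _ => hWsym j i

lemma tv_two {n : ℕ} (W : Matrix (Fin n) (Fin n) ℝ) (hWsym : ∀ i j, W i j = W j i)
    (C : Finset (Fin n)) (a b : ℝ) (hba : b ≤ a) :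
    tv W (fun i => if i ∈ C then a else b) = (a - b) * cutF W C Cᶜ := by
  have key : ∀ i j : Fin n, W i j * |(if i ∈ C then a else b) - (if j ∈ C then a else b)| =
      (a - b) * ((if i ∈ C then (if j ∈ Cᶜ then W i j else 0) else 0)
        + (if i ∈ Cᶜ then (if j ∈ C then W i j else 0) else 0)) := by
    intro i j
    by_cases hi : i ∈ C <;> by_cases hj : j ∈ C <;>
      simp [hi, hj, abs_of_nonneg, abs_of_nonpos, sub_nonneg.2 hba, sub_nonpos.2 hba, abs_sub_comm] <;>
      ring
  have inner : ∀ (B : Finset (Fin n)) (g : Fin n → ℝ),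
      (∑ j : Fin n, if j ∈ B then g j else 0) = ∑ j ∈ B, g j := by
    intro B g
    rw [Finset.sum_ite_mem, Finset.univ_inter]
  have hcut : ∀ (A B : Finset (Fin n)), (∑ i : Fin n, ∑ j : Fin n,
      (if i ∈ A then (if j ∈ B then W i j else 0) else 0)) = cutF W A B := by
    intro A B
    unfold cutF
    rw [← inner A fun i => ∑ j ∈ B, W i j]
    apply Finset.sum_congr rfl
    intro i _
    by_cases hi : i ∈ A <;> simp [hi, inner B (W i)]
  have expand : (∑ i : Fin n, ∑ j : Fin n,
      W i j * |(if i ∈ C then a else b) - (if j ∈ C then a else b)|)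
      = (a - b) * (cutF W C Cᶜ + cutF W Cᶜ C) := by
    simp only [key, mul_add, Finset.sum_add_distrib, ← Finset.mul_sum]
    rw [hcut, hcut]
  unfold tv
  rw [expand, cutF_symm W hWsym Cᶜ C]
  ring

lemma sum_range_cast (k : ℕ) : ∑ i ∈ Finset.range k, ((i : ℝ) + 1) = k * (k + 1) / 2 := by
  induction k with
  | zero => simp
  | succ k ih =>
    rw [Finset.sum_range_succ, ih]
    push_cast
    ring

/-- For a symmetric balancing function, the simplex-constrained relaxation has
optimal value k times the optimal single balanced 2-cut ratio, given the exact
single-ratio relaxation result. -/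
theorem simplex_relaxation_void {n k : ℕ} (hk : 2 ≤ k)
    (W : Matrix (Fin n) (Fin n) ℝ)
    (hW : ∀ i j, 0 ≤ W i j) (hWsym : ∀ i j, W i j = W j i)
    (Sh : Finset (Fin n) → ℝ) (h0 : Sh ∅ = 0) (hnn : ∀ A, 0 ≤ Sh A)
    (hsym : ∀ A : Finset (Fin n), Sh A = Sh Aᶜ)
    (hpos : ∀ C : Finset (Fin n), C.Nonempty → C ≠ Finset.univ → 0 < Sh C)
    (c : ℝ)
    (hsingle : IsLeast {r : ℝ | ∃ f : Fin n → ℝ,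
        (¬ ∃ a : ℝ, ∀ i, f i = a) ∧ r = tv W f / lovasz Sh f} c)
    (hcut : IsLeast {r : ℝ | ∃ C : Finset (Fin n),
        C.Nonempty ∧ C ≠ Finset.univ ∧ r = cutF W C Cᶜ / Sh C} c) :
    IsLeast {r : ℝ | ∃ F : Fin n → Fin k → ℝ,
        (∀ i l, 0 ≤ F i l) ∧ (∀ i, ∑ l, F i l = 1) ∧
        (∀ l, 0 < lovasz Sh (fun i => F i l)) ∧
        r = ∑ l, tv W (fun i => F i l) / lovasz Sh (fun i => F i l)}
      (k * c) := by
  haveI : NeZero k := ⟨by omega⟩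
  have hu : Sh Finset.univ = 0 := by
    rw [← Finset.compl_empty, ← hsym, h0]
  obtain ⟨C, hCne, hCu, hcval⟩ := hcut.1
  have hShC : 0 < Sh C := hpos C hCne hCu
  have hCcne : Cᶜ.Nonempty := by
    obtain ⟨x, _, hx⟩ := Finset.exists_of_ssubset (Finset.ssubset_univ_iff.2 hCu)
    exact ⟨x, Finset.mem_compl.2 hx⟩
  have hCcu : Cᶜ ≠ Finset.univ := by
    simp only [ne_eq, Finset.compl_eq_univ_iff]
    exact hCne.ne_empty
  -- column lemma
  have hcol : ∀ x y : ℝ, x ≠ y →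
      0 < lovasz Sh (fun i => if i ∈ C then x else y) ∧
      tv W (fun i => if i ∈ C then x else y) / lovasz Sh (fun i => if i ∈ C then x else y) = c := by
    intro x y hxy
    rcases lt_or_gt_of_ne hxy with h | h
    · -- x < y : rewrite as Cᶜ indicator
      have hfe : (fun i => if i ∈ C then x else y) = (fun i => if i ∈ Cᶜ then y else x) := by
        funext i
        by_cases hi : i ∈ C <;> simp [hi]
      rw [hfe, lovasz_two Sh h0 hu Cᶜ hCcne hCcu y x h,
        tv_two W hWsym Cᶜ y x h.le, compl_compl, cutF_symm W hWsym Cᶜ C, ← hsym C]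
      constructor
      · exact mul_pos (by linarith) hShC
      · rw [mul_div_mul_left _ _ (by linarith : y - x ≠ 0)]
        exact hcval.symm
    · rw [lovasz_two Sh h0 hu C hCne hCu x y h, tv_two W hWsym C x y h.le]
      constructor
      · exact mul_pos (by linarith) hShC
      · rw [mul_div_mul_left _ _ (by linarith : x - y ≠ 0)]
        exact hcval.symm
  constructor
  · -- membership
    set s : ℝ := 2 / (k * (k + 1)) with hs
    have hks : (0:ℝ) < k * (k+1) := by positivity
    have hspos : 0 < s := by positivity
    set av : Fin k → ℝ := fun l => ((l : ℕ) + 1) * s with hav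
    have hsum_a : ∑ l, av l = 1 := by
      rw [hav]
      simp only
      rw [← Finset.sum_mul, Fin.sum_univ_eq_sum_range (fun i => ((i:ℝ) + 1)), sum_range_cast, hs,
        div_mul_div_comm, div_eq_one_iff_eq (by positivity)]
      ring
    have hsum_b : ∑ l : Fin k, av (l + 1) = 1 := by
      rw [← hsum_a]
      exact Equiv.sum_comp (Equiv.addRight (1 : Fin k)) av
    have hab : ∀ l : Fin k, av l ≠ av (l + 1) := by
      intro l h
      have hvne : ((l : ℕ)) ≠ ((l + 1 : Fin k) : ℕ) := by
        have h1 : ((l + 1 : Fin k) : ℕ) = ((l : ℕ) + 1) % k := by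
          rw [Fin.add_def, Fin.val_one', Nat.mod_eq_of_lt (show 1 < k by omega)]
        have h2 := l.isLt
        rw [h1]
        intro heq
        rcases Nat.lt_or_ge ((l : ℕ) + 1) k with hlt | hge
        · rw [Nat.mod_eq_of_lt hlt] at heq
          omega
        · have hek : (l : ℕ) + 1 = k := by omega
          rw [hek, Nat.mod_self] at heq
          omega
      apply hvne
      have h3 : ((l : ℕ) : ℝ) + 1 = (((l + 1 : Fin k) : ℕ) : ℝ) + 1 :=
        mul_right_cancel₀ hspos.ne' h
      have h4 : ((l : ℕ) : ℝ) = (((l + 1 : Fin k) : ℕ) : ℝ) := by linarith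
      exact_mod_cast h4
    refine ⟨fun i l => if i ∈ C then av l else av (l + 1), ?_, ?_, ?_, ?_⟩
    · intro i l
      by_cases hi : i ∈ C <;> simp [hi] <;> positivity
    · intro i
      by_cases hi : i ∈ C <;> simp [hi, hsum_a, hsum_b]
    · intro l
      exact (hcol (av l) (av (l + 1)) (hab l)).1
    · rw [show (∑ l : Fin k, tv W (fun i => if i ∈ C then av l else av (l+1)) /
          lovasz Sh (fun i => if i ∈ C then av l else av (l+1))) = ∑ _l : Fin k, c from
        Finset.sum_congr rfl fun l _ => (hcol (av l) (av (l + 1)) (hab l)).2]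
      simp [mul_comm]
  · -- lower bound
    rintro r ⟨F, hFnn, hFrow, hFpos, rfl⟩
    have hterm : ∀ l : Fin k, c ≤ tv W (fun i => F i l) / lovasz Sh (fun i => F i l) := by
      intro l
      apply hsingle.2
      refine ⟨fun i => F i l, ?_, rfl⟩
      rintro ⟨a, ha⟩
      have : lovasz Sh (fun i => F i l) = 0 := by
        rw [show (fun i => F i l) = (fun _ => a) from funext ha]
        exact lovasz_const Sh h0 hu a
      exact absurd this (ne_of_gt (hFpos l))
    calc (k : ℝ) * c = ∑ _l : Fin k, c := by simp [mul_comm]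
      _ ≤ _ := Finset.sum_le_sum fun l _ => hterm l
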